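/- Let 1 < r < 2 and define f(t) = (1 + r·t + t^r)/(1 + t)^r for t ≥ 0. Then f attains its maximum over [0, +∞) at the point t₁ = (r−1)^{1/(r−2)}, t₁ is the only stationary point of f in (0, +∞), and the maximum value equals k̂(r) = (1 + r·(r−1)^{1/(r−2)} + (r−1)^{r/(r−2)}) / (1 + (r−1)^{1/(r−2)})^r. -/

import Mathlib

open Set MeasureTheory Filter

/-- The conjugate exponent `p' = p/(p-1)`. -/
noncomputable def pconj (p : ℝ) : ℝ := p / (p - 1)

/-- The constant `k(p)` from the paper. -/
noncomputable def kfun (p : ℝ) : ℝ :=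
  if p < 2 then 1 / (2 ^ (pconj p - 1) - 1)
  else if p = 2 then 1
  else pconj p / (pconj p - 1 +
    (1 + pconj p * (pconj p - 1) ^ ((1 : ℝ) / (pconj p - 2)) +
      (pconj p - 1) ^ (pconj p / (pconj p - 2))) /
    (1 + (pconj p - 1) ^ ((1 : ℝ) / (pconj p - 2))) ^ pconj p)

/-- Standing assumptions on the data `p, θ, D, H, h, g` (combustion setting). -/
structure CombSetup (p θ : ℝ) (D H h g : ℝ → ℝ) : Prop where
  hp : 1 < p
  hθ0 : 0 < θ
  hθ1 : θ < 1
  hD : ContDiffOn ℝ 1 D (Ioo 0 1)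
  hDpos : ∀ v ∈ Ioo (0 : ℝ) 1, 0 < D v
  hH : ContDiffOn ℝ 1 H (Icc 0 1)
  hH0 : H 0 = 0
  hh : ContinuousOn h (Icc 0 1)
  hHd : ∀ v ∈ Icc (0 : ℝ) 1, HasDerivWithinAt H (h v) (Icc 0 1) v
  hgc : ContinuousOn g (Icc 0 1)
  hg0 : ∀ v ∈ Icc (0 : ℝ) θ, g v = 0
  hgpos : ∀ v ∈ Ioo θ 1, 0 < g v
  hg1 : g 1 = 0
  hInt : IntegrableOn (fun v => D v ^ (pconj p - 1) * g v) (Ioo 0 1)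

/-- The diffusive flux `ξ ↦ D(u(ξ)) |u'(ξ)|^{p-2} u'(ξ)`. -/
noncomputable def flux (p : ℝ) (D u : ℝ → ℝ) : ℝ → ℝ :=
  fun ξ => D (u ξ) * (|deriv u ξ| ^ (p - 2) * deriv u ξ)

/-- Solution of the traveling-wave problem with speed `c`. -/
structure IsTWSol (p c : ℝ) (D h g : ℝ → ℝ) (u : ℝ → ℝ) : Prop where
  cont : Continuous u
  mem : ∀ ξ, u ξ ∈ Icc (0 : ℝ) 1
  smooth : ContDiffOn ℝ 1 u {ξ | u ξ ∈ Ioo (0 : ℝ) 1}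
  eqn : ∀ ξ ∈ {ξ | u ξ ∈ Ioo (0 : ℝ) 1},
    HasDerivAt (flux p D u) (-(c + h (u ξ)) * deriv u ξ - g (u ξ)) ξ
  flux_cont : Continuous (fun ξ => if u ξ ∈ Ioo (0 : ℝ) 1 then flux p D u ξ else 0)
  flux_to0 : ∀ ε > 0, ∃ δ > 0, ∀ ξ, u ξ ∈ Ioo (0 : ℝ) 1 → u ξ < δ → |flux p D u ξ| < ε
  flux_to1 : ∀ ε > 0, ∃ δ > 0, ∀ ξ, u ξ ∈ Ioo (0 : ℝ) 1 → 1 - δ < u ξ → |flux p D u ξ| < ε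
  lim_bot : Tendsto u atBot (nhds 1)
  lim_top : Tendsto u atTop (nhds 0)

/-- Positive solution of the first-order problem with parameter `c`. -/
structure IsFOSol (p c : ℝ) (D h g : ℝ → ℝ) (y : ℝ → ℝ) : Prop where
  cont : ContinuousOn y (Icc 0 1)
  eqn : ∀ v ∈ Ioo (0 : ℝ) 1, HasDerivAt y
    (pconj p * ((c + h v) * (max (y v) 0) ^ (1 / p) - D v ^ (pconj p - 1) * g v)) v
  y0 : y 0 = 0
  y1 : y 1 = 0
  pos : ∀ v ∈ Ioo (0 : ℝ) 1, 0 < y v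

/-- The constant `k̂(r)` from the technical lemma. -/
noncomputable def khat (r : ℝ) : ℝ :=
  (1 + r * (r - 1) ^ ((1 : ℝ) / (r - 2)) + (r - 1) ^ (r / (r - 2))) /
    (1 + (r - 1) ^ ((1 : ℝ) / (r - 2))) ^ r

lemma hder (r : ℝ) (t : ℝ) (ht : 0 < t) :
    HasDerivAt (fun t : ℝ => (1 + r * t + t ^ r) / (1 + t) ^ r)
      (r * t * (t ^ (r-2) - (r-1)) / (1+t) ^ (r+1)) t := by
  have h1t : (0:ℝ) < 1 + t := by linarith
  have hN : HasDerivAt (fun t : ℝ => 1 + r * t + t ^ r) (r + r * t ^ (r-1)) t := by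
    have h1 : HasDerivAt (fun t : ℝ => 1 + r * t) r t := by
      simpa using ((hasDerivAt_id t).const_mul r).const_add 1
    exact h1.add (Real.hasDerivAt_rpow_const (Or.inl ht.ne'))
  have hD : HasDerivAt (fun t : ℝ => (1 + t) ^ r) (r * (1 + t) ^ (r-1)) t := by
    have := ((hasDerivAt_id t).const_add 1).rpow_const (p := r) (Or.inl h1t.ne')
    simpa using this
  have hDne : (1 + t) ^ r ≠ 0 := (Real.rpow_pos_of_pos h1t r).ne'
  have h := hN.div hD hDne
  refine h.congr_deriv ?_
  have e1 : (1+t) ^ r = (1+t) ^ (r-1) * (1+t) := by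
    rw [← Real.rpow_add_one h1t.ne' (r-1)]; ring_nf
  have e2 : (1+t) ^ (r+1) = (1+t) ^ (r-1) * (1+t) * (1+t) := by
    rw [← Real.rpow_add_one h1t.ne' (r-1), ← Real.rpow_add_one h1t.ne']; ring_nf
  have e3 : t ^ (r-1) = t ^ (r-2) * t := by
    rw [← Real.rpow_add_one ht.ne' (r-2)]; ring_nf
  have e4 : t ^ r = t ^ (r-2) * t * t := by
    rw [← Real.rpow_add_one ht.ne' (r-2), ← Real.rpow_add_one ht.ne']; ring_nf
  have hgne : (1+t) ^ (r-1) ≠ 0 := (Real.rpow_pos_of_pos h1t _).ne'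
  rw [e1, e2, e3, e4]
  field_simp
  ring

/-- Maximum of the auxiliary function for `1 < r < 2`.
`f(t) = (1 + r t + t^r)/(1+t)^r` attains its maximum over `[0,∞)` at
`t₁ = (r-1)^{1/(r-2)}`, which is the only stationary point of `f` in `(0,∞)`,
and the maximal value is `k̂(r)`. -/
theorem stmt13 (r : ℝ) (hr1 : 1 < r) (hr2 : r < 2) :
    (∀ t : ℝ, 0 ≤ t →
        (1 + r * t + t ^ r) / (1 + t) ^ r ≤
        (1 + r * ((r - 1) ^ ((1 : ℝ) / (r - 2))) +
            ((r - 1) ^ ((1 : ℝ) / (r - 2))) ^ r) /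
          (1 + (r - 1) ^ ((1 : ℝ) / (r - 2))) ^ r) ∧
    deriv (fun t : ℝ => (1 + r * t + t ^ r) / (1 + t) ^ r) ((r - 1) ^ ((1 : ℝ) / (r - 2))) = 0 ∧
    (∀ t : ℝ, 0 < t →
        deriv (fun t : ℝ => (1 + r * t + t ^ r) / (1 + t) ^ r) t = 0 →
        t = (r - 1) ^ ((1 : ℝ) / (r - 2))) ∧
    (1 + r * ((r - 1) ^ ((1 : ℝ) / (r - 2))) +
        ((r - 1) ^ ((1 : ℝ) / (r - 2))) ^ r) /
      (1 + (r - 1) ^ ((1 : ℝ) / (r - 2))) ^ r = khat r := by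
  set f : ℝ → ℝ := fun t : ℝ => (1 + r * t + t ^ r) / (1 + t) ^ r with hf
  set t₁ : ℝ := (r - 1) ^ ((1 : ℝ) / (r - 2)) with ht₁
  have hr2ne : r - 2 ≠ 0 := by linarith
  have ha : (0:ℝ) < r - 1 := by linarith
  have ht₁pos : 0 < t₁ := Real.rpow_pos_of_pos ha _
  have hkey : t₁ ^ (r - 2) = r - 1 := by
    rw [ht₁, ← Real.rpow_mul ha.le]
    rw [one_div, inv_mul_cancel₀ hr2ne, Real.rpow_one]
  have hcont : ∀ x : ℝ, 0 ≤ x → ContinuousAt f x := by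
    intro x hx
    have h1x : (0:ℝ) < 1 + x := by linarith
    apply ContinuousAt.div
    · exact (continuousAt_const.add (continuousAt_const.mul continuousAt_id)).add
        (Real.continuousAt_rpow_const x r (Or.inr (by linarith)))
    · exact (continuousAt_const.add continuousAt_id).rpow_const (Or.inl h1x.ne')
    · exact (Real.rpow_pos_of_pos h1x r).ne'
  have hmono : StrictMonoOn f (Icc 0 t₁) := by
    apply strictMonoOn_of_deriv_pos (convex_Icc _ _)
      (fun x hx => (hcont x hx.1).continuousWithinAt)
    intro x hx
    rw [interior_Icc] at hx
    have hx0 : 0 < x := hx.1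
    rw [(hder r x hx0).deriv]
    have hlt : r - 1 < x ^ (r - 2) := by
      rw [← hkey]; exact Real.rpow_lt_rpow_of_neg hx0 hx.2 (by linarith)
    apply div_pos
    · apply mul_pos (mul_pos (by linarith) hx0); linarith
    · exact Real.rpow_pos_of_pos (by linarith) _
  have hanti : StrictAntiOn f (Ici t₁) := by
    apply strictAntiOn_of_deriv_neg (convex_Ici _)
      (fun x hx => (hcont x (le_trans ht₁pos.le hx)).continuousWithinAt)
    intro x hx
    rw [interior_Ici] at hx
    have hx0 : 0 < x := lt_trans ht₁pos hx
    rw [(hder r x hx0).deriv]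
    have hlt : x ^ (r - 2) < r - 1 := by
      rw [← hkey]; exact Real.rpow_lt_rpow_of_neg ht₁pos hx (by linarith)
    apply div_neg_of_neg_of_pos
    · apply mul_neg_of_pos_of_neg (mul_pos (by linarith) hx0); linarith
    · exact Real.rpow_pos_of_pos (by linarith) _
  refine ⟨?_, ?_, ?_, ?_⟩
  · intro t ht
    show f t ≤ f t₁
    rcases le_total t t₁ with h | h
    · exact hmono.monotoneOn ⟨ht, h⟩ ⟨ht₁pos.le, le_refl _⟩ h
    · exact hanti.antitoneOn (mem_Ici.2 le_rfl) (mem_Ici.2 h) h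
  · rw [(hder r t₁ ht₁pos).deriv, hkey]
    simp
  · intro t ht hd
    rw [(hder r t ht).deriv] at hd
    have hden : (0:ℝ) < (1 + t) ^ (r + 1) := Real.rpow_pos_of_pos (by linarith) _
    have hnum : r * t * (t ^ (r - 2) - (r - 1)) = 0 := by
      field_simp at hd; simpa using hd
    have h3 : t ^ (r - 2) = r - 1 := by
      rcases mul_eq_zero.1 hnum with h | h
      · rcases mul_eq_zero.1 h with h | h
        · linarith
        · exact absurd h ht.ne'
      · linarith
    have : (t ^ (r - 2)) ^ ((1:ℝ) / (r - 2)) = t := by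
      rw [← Real.rpow_mul ht.le, mul_one_div, div_self hr2ne, Real.rpow_one]
    rw [← this, h3]
  · unfold khat
    rw [ht₁, ← Real.rpow_mul ha.le, one_div, inv_mul_eq_div]
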